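/- Let X = I_1 ∪ ... ∪ I_k ⊆ ℝ^n be a finite union of segments whose closures are pairwise disjoint (i.e., cl(I_s) ∩ cl(I_t) = ∅ for s ≠ t). Then the lattice Co(ℝ^n, X) of relatively convex subsets of X is join-semidistributive. -/

import Mathlib

open Set

noncomputable section

namespace JsdAux

variable {F : Type*} [NormedAddCommGroup F] [InnerProductSpace ℝ F]

/-- coordinate along the line through `a`, `b`. -/
def lphi (a b : F) (z : F) : ℝ := inner ℝ (b - a) (z - a) / inner ℝ (b - a) (b - a)

/-- parametrization of the line through `a`, `b`. -/
def lpsi (a b : F) (t : ℝ) : F := a + t • (b - a)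

theorem lpsi_continuous (a b : F) : Continuous (lpsi a b) := by
  unfold lpsi; fun_prop

theorem lphi_continuous (a b : F) : Continuous (lphi a b) := by
  unfold lphi
  exact (continuous_const.inner (continuous_id.sub continuous_const)).div_const _

theorem lphi_lpsi {a b : F} (hab : a ≠ b) (t : ℝ) : lphi a b (lpsi a b t) = t := by
  have hu : (b - a) ≠ 0 := sub_ne_zero.mpr (Ne.symm hab)
  have hc : (inner ℝ (b - a) (b - a) : ℝ) ≠ 0 := inner_self_ne_zero.mpr hu
  rw [lphi, lpsi, add_sub_cancel_left, real_inner_smul_right, mul_div_assoc, div_self hc,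
    mul_one]

theorem lpsi_lphi {a b : F} (hab : a ≠ b) {z : F} (hz : z ∈ segment ℝ a b) :
    lpsi a b (lphi a b z) = z := by
  rw [segment_eq_image'] at hz
  obtain ⟨t, _, rfl⟩ := hz
  show lpsi a b (lphi a b (lpsi a b t)) = lpsi a b t
  rw [lphi_lpsi hab]

theorem lphi_affine (a b : F) {l m : ℝ} (h : l + m = 1) (x y : F) :
    lphi a b (l • x + m • y) = l * lphi a b x + m * lphi a b y := by
  have hx : l • x + m • y - a = l • (x - a) + m • (y - a) := by
    calc l • x + m • y - a = l • x + m • y - (l + m) • a := by rw [h, one_smul]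
    _ = l • (x - a) + m • (y - a) := by rw [add_smul, smul_sub, smul_sub]; abel
  rw [lphi, lphi, lphi, hx, inner_add_right, real_inner_smul_right, real_inner_smul_right,
    add_div, mul_div_assoc, mul_div_assoc]

theorem lpsi_affine (a b : F) {l m : ℝ} (h : l + m = 1) (s t : ℝ) :
    lpsi a b (l * s + m * t) = l • lpsi a b s + m • lpsi a b t := by
  unfold lpsi
  match_scalars
  · linear_combination ((-1 : ℝ)) * h
  · ring

theorem lphi_mem_Icc {a b : F} (hab : a ≠ b) {z : F} (hz : z ∈ segment ℝ a b) :
    lphi a b z ∈ Icc (0:ℝ) 1 := by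
  rw [segment_eq_image'] at hz
  obtain ⟨t, ht, rfl⟩ := hz
  show lphi a b (lpsi a b t) ∈ Icc (0:ℝ) 1
  rwa [lphi_lpsi hab]

theorem convex_lphi_image {a b : F} {S : Set F} (hS : Convex ℝ S) :
    Convex ℝ (lphi a b '' S) := by
  rintro t1 ⟨s1, hs1, rfl⟩ t2 ⟨s2, hs2, rfl⟩ l m hl hm hlm
  exact ⟨l • s1 + m • s2, hS hs1 hs2 hl hm hlm, by
    rw [lphi_affine a b hlm, smul_eq_mul, smul_eq_mul]⟩

theorem lpsi_image_segment (a b : F) (p q : ℝ) :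
    lpsi a b '' segment ℝ p q = segment ℝ (lpsi a b p) (lpsi a b q) := by
  ext z
  constructor
  · rintro ⟨t, ⟨l, m, hl, hm, hlm, rfl⟩, rfl⟩
    exact ⟨l, m, hl, hm, hlm, by
      rw [smul_eq_mul, smul_eq_mul, lpsi_affine a b hlm]⟩
  · rintro ⟨l, m, hl, hm, hlm, rfl⟩
    exact ⟨l * p + m * q, ⟨l, m, hl, hm, hlm, by rw [smul_eq_mul, smul_eq_mul]⟩,
      (lpsi_affine a b hlm p q)⟩

theorem isClosed_segment' (a b : F) : IsClosed (segment ℝ a b) := by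
  rw [← convexHull_pair]
  exact ((finite_singleton b).insert a).isClosed_convexHull ℝ

set_option linter.unusedSectionVars false


variable {F : Type*} [NormedAddCommGroup F] [InnerProductSpace ℝ F]

theorem real_aux_lt {B C : Set ℝ} (hB : Convex ℝ B) (hC : Convex ℝ C) {v : ℝ}
    (hvB : v ∈ closure B) (hvC : v ∈ closure C)
    (hB' : ∀ z ∈ B, z < v) (hC' : ∀ z ∈ C, z < v) : v ∈ closure (B ∩ C) := by
  have hBne : B.Nonempty := by
    rcases eq_empty_or_nonempty B with rfl | h
    · rw [closure_empty] at hvB; exact absurd hvB (notMem_empty v)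
    · exact h
  have hCne : C.Nonempty := by
    rcases eq_empty_or_nonempty C with rfl | h
    · rw [closure_empty] at hvC; exact absurd hvC (notMem_empty v)
    · exact h
  obtain ⟨b0, hb0⟩ := hBne
  obtain ⟨c0, hc0⟩ := hCne
  set m := max b0 c0 with hm
  have hmv : m < v := max_lt (hB' _ hb0) (hC' _ hc0)
  have hsub : Ioo m v ⊆ B ∩ C := by
    rintro t ⟨ht1, ht2⟩
    constructor
    · obtain ⟨b1, hb1B, hb1⟩ := Metric.mem_closure_iff.mp hvB (v - t) (by linarith)
      have hb1v : b1 < v := hB' _ hb1B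
      have htb1 : t < b1 := by
        rw [Real.dist_eq, abs_lt] at hb1
        linarith [hb1.2]
      exact hB.ordConnected.out hb0 hb1B
        ⟨by linarith [le_max_left b0 c0], le_of_lt htb1⟩
    · obtain ⟨c1, hc1C, hc1⟩ := Metric.mem_closure_iff.mp hvC (v - t) (by linarith)
      have hc1v : c1 < v := hC' _ hc1C
      have htc1 : t < c1 := by
        rw [Real.dist_eq, abs_lt] at hc1
        linarith [hc1.2]
      exact hC.ordConnected.out hc0 hc1C
        ⟨by linarith [le_max_right b0 c0], le_of_lt htc1⟩
  have hv : v ∈ closure (Ioo m v) := by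
    rw [closure_Ioo (ne_of_lt hmv)]
    exact ⟨le_of_lt hmv, le_refl v⟩
  exact closure_mono hsub hv

theorem real_aux_gt {B C : Set ℝ} (hB : Convex ℝ B) (hC : Convex ℝ C) {v : ℝ}
    (hvB : v ∈ closure B) (hvC : v ∈ closure C)
    (hB' : ∀ z ∈ B, v < z) (hC' : ∀ z ∈ C, v < z) : v ∈ closure (B ∩ C) := by
  have hBne : B.Nonempty := by
    rcases eq_empty_or_nonempty B with rfl | h
    · rw [closure_empty] at hvB; exact absurd hvB (notMem_empty v)
    · exact h
  have hCne : C.Nonempty := by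
    rcases eq_empty_or_nonempty C with rfl | h
    · rw [closure_empty] at hvC; exact absurd hvC (notMem_empty v)
    · exact h
  obtain ⟨b0, hb0⟩ := hBne
  obtain ⟨c0, hc0⟩ := hCne
  set m := min b0 c0 with hm
  have hmv : v < m := lt_min (hB' _ hb0) (hC' _ hc0)
  have hsub : Ioo v m ⊆ B ∩ C := by
    rintro t ⟨ht1, ht2⟩
    constructor
    · obtain ⟨b1, hb1B, hb1⟩ := Metric.mem_closure_iff.mp hvB (t - v) (by linarith)
      have hb1v : v < b1 := hB' _ hb1B
      have htb1 : b1 < t := by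
        rw [Real.dist_eq, abs_lt] at hb1
        linarith [hb1.1]
      exact hB.ordConnected.out hb1B hb0
        ⟨le_of_lt htb1, by linarith [min_le_left b0 c0]⟩
    · obtain ⟨c1, hc1C, hc1⟩ := Metric.mem_closure_iff.mp hvC (t - v) (by linarith)
      have hc1v : v < c1 := hC' _ hc1C
      have htc1 : c1 < t := by
        rw [Real.dist_eq, abs_lt] at hc1
        linarith [hc1.1]
      exact hC.ordConnected.out hc1C hc0
        ⟨le_of_lt htc1, by linarith [min_le_right b0 c0]⟩
  have hv : v ∈ closure (Ioo v m) := by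
    rw [closure_Ioo (ne_of_lt hmv)]
    exact ⟨le_refl v, le_of_lt hmv⟩
  exact closure_mono hsub hv

theorem closure_convex_segment {S : Set F} {a b : F} (hS : Convex ℝ S)
    (hsub : S ⊆ segment ℝ a b) (hne : S.Nonempty) :
    ∃ p q : F, closure S = segment ℝ p q := by
  rcases eq_or_ne a b with rfl | hab
  · rw [segment_same] at hsub
    have hSa : S = {a} := (subset_singleton_iff_eq.mp hsub).resolve_left
      (nonempty_iff_ne_empty.mp hne)
    exact ⟨a, a, by rw [hSa, closure_singleton, segment_same]⟩
  · set T := lphi a b '' S with hT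
    have hTne : T.Nonempty := hne.image _
    have hTsub : T ⊆ Icc 0 1 := by rintro t ⟨s, hs, rfl⟩; exact lphi_mem_Icc hab (hsub hs)
    have hbdd : BddAbove T := ⟨1, fun t ht => (hTsub ht).2⟩
    have hbddb : BddBelow T := ⟨0, fun t ht => (hTsub ht).1⟩
    set p := sInf T with hp
    set q := sSup T with hq
    have hpq : p ≤ q := csInf_le_csSup hTne hbddb hbdd
    have hToo : Ioo p q ⊆ T := by
      intro t ht
      obtain ⟨t1, ht1T, ht1⟩ := exists_lt_of_csInf_lt hTne ht.1
      obtain ⟨t2, ht2T, ht2⟩ := exists_lt_of_lt_csSup hTne ht.2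
      exact (convex_lphi_image hS).ordConnected.out ht1T ht2T ⟨le_of_lt ht1, le_of_lt ht2⟩
    have hclT : closure T = Icc p q := by
      apply Subset.antisymm
      · exact closure_minimal (fun t ht => ⟨csInf_le hbddb ht, le_csSup hbdd ht⟩) isClosed_Icc
      · rcases eq_or_lt_of_le hpq with heq | hlt
        · intro t ht
          have : t = p := le_antisymm (heq ▸ ht.2) ht.1
          rw [this]
          exact csInf_mem_closure hTne hbddb
        · rw [← closure_Ioo (ne_of_lt hlt)]
          exact closure_mono hToo
    have hSpsi : S = lpsi a b '' T := by
      ext s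
      constructor
      · intro hs; exact ⟨lphi a b s, ⟨s, hs, rfl⟩, lpsi_lphi hab (hsub hs)⟩
      · rintro ⟨t, ⟨s', hs', rfl⟩, rfl⟩; rwa [lpsi_lphi hab (hsub hs')]
    have h1 : closure S ⊆ lpsi a b '' Icc p q := by
      apply closure_minimal
      · rw [hSpsi]
        exact image_mono (subset_closure.trans hclT.le)
      · exact (isCompact_Icc.image (lpsi_continuous a b)).isClosed
    have h2 : lpsi a b '' Icc p q ⊆ closure S := by
      calc lpsi a b '' Icc p q = lpsi a b '' closure T := by rw [hclT]
      _ ⊆ closure (lpsi a b '' T) := image_closure_subset_closure_image (lpsi_continuous a b)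
      _ = closure S := by rw [← hSpsi]
    refine ⟨lpsi a b p, lpsi a b q, ?_⟩
    rw [Subset.antisymm h1 h2, ← segment_eq_Icc hpq, lpsi_image_segment]

theorem closure_iUnion_fin {σ : Type*} [Finite σ] (S : σ → Set F) :
    closure (⋃ j, S j) = ⋃ j, closure (S j) :=
  Subset.antisymm
    (closure_minimal (iUnion_mono fun _ => subset_closure)
      (isClosed_iUnion_of_finite fun _ => isClosed_closure))
    (iUnion_subset fun j => closure_mono (subset_iUnion S j))

theorem mem_of_extreme {K S : Set F} {v : F} (hK : Convex ℝ K) (hv : v ∈ extremePoints ℝ K)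
    (hS : S ⊆ K) (hmem : v ∈ convexHull ℝ S) : v ∈ S := by
  apply extremePoints_convexHull_subset (𝕜 := ℝ) (A := S)
  rw [mem_extremePoints] at hv ⊢
  exact ⟨hmem, fun x1 h1 x2 h2 ho =>
    hv.2 x1 (convexHull_min hS hK h1) x2 (convexHull_min hS hK h2) ho⟩

theorem convexHull_union_segments {σ : Type*} [Finite σ] (S : σ → Set F)
    (h : ∀ s, (∃ p q, S s = segment ℝ p q) ∨ S s = ∅) :
    ∃ P : Set F, P.Finite ∧ convexHull ℝ (⋃ s, S s) = convexHull ℝ P := by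
  classical
  set ep : σ → Set F := fun s =>
    if hs : ∃ p q, S s = segment ℝ p q then {hs.choose, hs.choose_spec.choose} else ∅ with hep
  refine ⟨⋃ s, ep s, finite_iUnion (fun s => by
    by_cases hs : ∃ p q, S s = segment ℝ p q
    · rw [hep]; simp only [dif_pos hs]; exact (finite_singleton _).insert _
    · rw [hep]; simp only [dif_neg hs]; exact finite_empty), ?_⟩
  apply Subset.antisymm
  · apply convexHull_min ?_ (convex_convexHull ℝ _)
    apply iUnion_subset
    intro s
    rcases h s with ⟨p, q, hseq⟩ | hemp
    · have hs : ∃ p q, S s = segment ℝ p q := ⟨p, q, hseq⟩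
      have h1 : S s = segment ℝ hs.choose hs.choose_spec.choose := hs.choose_spec.choose_spec
      have h2 : ep s = {hs.choose, hs.choose_spec.choose} := by rw [hep]; simp only [dif_pos hs]
      rw [h1, ← convexHull_pair]
      exact convexHull_mono (h2 ▸ subset_iUnion ep s)
    · rw [hemp]; exact empty_subset _
  · apply convexHull_mono
    apply iUnion_subset
    intro s
    by_cases hs : ∃ p q, S s = segment ℝ p q
    · have h1 : S s = segment ℝ hs.choose hs.choose_spec.choose := hs.choose_spec.choose_spec
      have h2 : ep s = {hs.choose, hs.choose_spec.choose} := by rw [hep]; simp only [dif_pos hs]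
      rw [h2]
      rintro z (rfl | rfl)
      · apply subset_iUnion S s
        have h3 := left_mem_segment ℝ hs.choose hs.choose_spec.choose
        rwa [← h1] at h3
      · apply subset_iUnion S s
        have h3 := right_mem_segment ℝ hs.choose hs.choose_spec.choose
        rwa [← h1] at h3
    · rw [hep]; simp only [dif_neg hs]; exact empty_subset _


theorem ext_2d {K Bt Ct : Set F} {a b v : F}
    (hext : v ∈ extremePoints ℝ K)
    (hBt : Convex ℝ Bt) (hBtK : Bt ⊆ K) (hBts : Bt ⊆ segment ℝ a b)
    (hCt : Convex ℝ Ct) (hCtK : Ct ⊆ K) (hCts : Ct ⊆ segment ℝ a b)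
    (hvB : v ∈ closure Bt) (hvB' : v ∉ Bt)
    (hvC : v ∈ closure Ct) (hvC' : v ∉ Ct)
    (hvs : v ∈ segment ℝ a b) :
    v ∈ closure (Bt ∩ Ct) := by
  rw [mem_extremePoints] at hext
  rcases eq_or_ne a b with rfl | hab
  · exfalso
    rw [segment_same] at hvs hBts
    rcases eq_empty_or_nonempty Bt with hemp | ⟨s, hs⟩
    · rw [hemp, closure_empty] at hvB; exact notMem_empty v hvB
    · have h1 : s = a := hBts hs
      have h2 : v = a := hvs
      exact hvB' (h2 ▸ h1 ▸ hs)
  · set w := lphi a b v with hw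
    have hvw : lpsi a b w = v := lpsi_lphi hab hvs
    set TB := lphi a b '' Bt with hTB
    set TC := lphi a b '' Ct with hTC
    have hwB : w ∈ closure TB :=
      image_closure_subset_closure_image (lphi_continuous a b) ⟨v, hvB, rfl⟩
    have hwC : w ∈ closure TC :=
      image_closure_subset_closure_image (lphi_continuous a b) ⟨v, hvC, rfl⟩
    have hInj : InjOn (lphi a b) (segment ℝ a b) := fun z1 h1 z2 h2 he => by
      rw [← lpsi_lphi hab h1, he, lpsi_lphi hab h2]
    have hmemv : ∀ s ∈ Bt ∪ Ct, lphi a b s = w → False := by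
      rintro s hs he
      have hseg : s ∈ segment ℝ a b := by rcases hs with h | h; exacts [hBts h, hCts h]
      have : s = v := hInj hseg hvs (by rw [he])
      rcases hs with h | h
      · exact hvB' (this ▸ h)
      · exact hvC' (this ▸ h)
    have hstrad : ∀ z1 ∈ Bt ∪ Ct, ∀ z2 ∈ Bt ∪ Ct,
        lphi a b z1 < w → w < lphi a b z2 → False := by
      intro z1 hz1 z2 hz2 h1 h2
      have hz1s : z1 ∈ segment ℝ a b := by rcases hz1 with h | h; exacts [hBts h, hCts h]
      have hz2s : z2 ∈ segment ℝ a b := by rcases hz2 with h | h; exacts [hBts h, hCts h]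
      have hz1K : z1 ∈ K := by rcases hz1 with h | h; exacts [hBtK h, hCtK h]
      have hz2K : z2 ∈ K := by rcases hz2 with h | h; exacts [hBtK h, hCtK h]
      have hv' : v ∈ openSegment ℝ z1 z2 := by
        have hIoo : w ∈ Ioo (lphi a b z1) (lphi a b z2) := ⟨h1, h2⟩
        rw [← openSegment_eq_Ioo (lt_trans h1 h2)] at hIoo
        obtain ⟨l, m, hl, hm, hlm, hweq⟩ := hIoo
        refine ⟨l, m, hl, hm, hlm, ?_⟩
        rw [smul_eq_mul, smul_eq_mul] at hweq
        rw [← hvw, ← hweq, lpsi_affine a b hlm, lpsi_lphi hab hz1s, lpsi_lphi hab hz2s]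
      have := (hext.2 z1 hz1K z2 hz2K hv').1
      rw [this] at h1
      exact lt_irrefl w h1
    have hTBne : TB.Nonempty := by
      rcases eq_empty_or_nonempty TB with hemp | h
      · rw [hemp, closure_empty] at hwB; exact absurd hwB (notMem_empty w)
      · exact h
    obtain ⟨z0, hz0⟩ := hTBne
    obtain ⟨s0, hs0, rfl⟩ := hz0
    have hz0w : lphi a b s0 ≠ w := fun h => hmemv s0 (Or.inl hs0) h
    have hmain : w ∈ closure (TB ∩ TC) := by
      rcases lt_or_gt_of_ne hz0w with h0 | h0
      · have hall : ∀ s ∈ Bt ∪ Ct, lphi a b s < w := by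
          intro s hs
          rcases lt_trichotomy (lphi a b s) w with h | h | h
          · exact h
          · exact absurd h (fun he => hmemv s hs he)
          · exact absurd h0 (fun _ => hstrad s0 (Or.inl hs0) s hs h0 h)
        exact real_aux_lt (convex_lphi_image hBt) (convex_lphi_image hCt) hwB hwC
          (by rintro _ ⟨s, hs, rfl⟩; exact hall s (Or.inl hs))
          (by rintro _ ⟨s, hs, rfl⟩; exact hall s (Or.inr hs))
      · have hall : ∀ s ∈ Bt ∪ Ct, w < lphi a b s := by
          intro s hs
          rcases lt_trichotomy (lphi a b s) w with h | h | h
          · exact absurd h0 (fun _ => hstrad s hs s0 (Or.inl hs0) h h0)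
          · exact absurd h (fun he => hmemv s hs he)
          · exact h
        exact real_aux_gt (convex_lphi_image hBt) (convex_lphi_image hCt) hwB hwC
          (by rintro _ ⟨s, hs, rfl⟩; exact hall s (Or.inl hs))
          (by rintro _ ⟨s, hs, rfl⟩; exact hall s (Or.inr hs))
    have himg : TB ∩ TC = lphi a b '' (Bt ∩ Ct) := (hInj.image_inter hBts hCts).symm
    rw [himg] at hmain
    have hfin : lpsi a b w ∈ closure (lpsi a b '' (lphi a b '' (Bt ∩ Ct))) :=
      image_closure_subset_closure_image (lpsi_continuous a b) ⟨w, hmain, rfl⟩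
    have hid : lpsi a b '' (lphi a b '' (Bt ∩ Ct)) = Bt ∩ Ct := by
      rw [← image_comp]
      have : EqOn (lpsi a b ∘ lphi a b) id (Bt ∩ Ct) := fun s hs =>
        lpsi_lphi hab (hBts hs.1)
      rw [image_congr this, image_id]
    rwa [hid, hvw] at hfin

variable {V : Type*} [NormedAddCommGroup V] [NormedSpace ℝ V] [FiniteDimensional ℝ V]

theorem exists_relint_pt {S : Set V} (hS : Convex ℝ S) (hne : S.Nonempty) :
    ∃ s0 ∈ S, ∃ ε > 0, ∀ y ∈ (affineSpan ℝ S : Set V), dist y s0 < ε → y ∈ S := by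
  obtain ⟨z, hz⟩ := hne.intrinsicInterior hS
  rw [mem_intrinsicInterior] at hz
  obtain ⟨y, hy, rfl⟩ := hz
  refine ⟨y, (interior_subset (s := Subtype.val ⁻¹' S) hy : _), ?_⟩
  rw [mem_interior_iff_mem_nhds, Metric.mem_nhds_iff] at hy
  obtain ⟨ε, hε, hball⟩ := hy
  refine ⟨ε, hε, fun w hw hd => ?_⟩
  have hmem : (⟨w, hw⟩ : affineSpan ℝ S) ∈ Metric.ball y ε := by
    rw [Metric.mem_ball, Subtype.dist_eq]
    exact hd
  exact hball hmem

theorem mem_of_relint {S : Set V} (hS : Convex ℝ S) (hne : S.Nonempty) {x : V}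
    (hxspan : x ∈ affineSpan ℝ S)
    (hx : ∃ ε > 0, ∀ y ∈ (affineSpan ℝ S : Set V), dist y x < ε → y ∈ closure S) :
    x ∈ S := by
  obtain ⟨s0, hs0S, ε0, hε0, h0⟩ := exists_relint_pt hS hne
  obtain ⟨ε, hε, hcl⟩ := hx
  rcases eq_or_ne x s0 with rfl | hxs
  · exact hs0S
  have hd : 0 < dist x s0 := dist_pos.mpr hxs
  set δ : ℝ := ε / (2 * dist x s0) with hδdef
  have hδ : 0 < δ := div_pos hε (by positivity)
  set z : V := δ • (x - s0) + x with hz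
  have hzspan : z ∈ affineSpan ℝ S := by
    have := (affineSpan ℝ S).smul_vsub_vadd_mem δ hxspan (subset_affineSpan ℝ S hs0S) hxspan
    simpa [vsub_eq_sub, vadd_eq_add] using this
  have hzd : dist z x < ε := by
    rw [hz, dist_eq_norm, add_sub_cancel_right, norm_smul, Real.norm_eq_abs,
      abs_of_pos hδ]
    rw [← dist_eq_norm]
    rw [hδdef]
    rw [div_mul_eq_mul_div]
    rw [div_lt_iff₀ (by positivity)]
    nlinarith [hd, hε]
  have hzcl : z ∈ closure S := hcl z hzspan hzd
  obtain ⟨s', hs'S, hs'd⟩ := Metric.mem_closure_iff.mp hzcl (δ * ε0) (by positivity)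
  set y : V := ((1 + δ) / δ) • (x - s') + s' with hy
  have hyspan : y ∈ (affineSpan ℝ S : Set V) := by
    have := (affineSpan ℝ S).smul_vsub_vadd_mem ((1 + δ) / δ) hxspan
      (subset_affineSpan ℝ S hs'S) (subset_affineSpan ℝ S hs'S)
    simpa [vsub_eq_sub, vadd_eq_add] using this
  have hys0 : dist y s0 < ε0 := by
    have hkey : y - s0 = δ⁻¹ • (z - s') := by
      rw [hy, hz]
      match_scalars <;> first | (field_simp; ring) | field_simp
    rw [dist_eq_norm, hkey, norm_smul, Real.norm_eq_abs, abs_of_pos (by positivity)]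
    have h1 : ‖z - s'‖ < δ * ε0 := by rw [← dist_eq_norm]; exact hs'd
    calc δ⁻¹ * ‖z - s'‖ < δ⁻¹ * (δ * ε0) := by
          exact mul_lt_mul_of_pos_left h1 (by positivity)
    _ = ε0 := by field_simp
  have hyS : y ∈ S := h0 y hyspan hys0
  have hxcombo : (1 / (1 + δ)) • s' + (δ / (1 + δ)) • y = x := by
    rw [hy]
    match_scalars <;> first | (field_simp; ring) | field_simp
  rw [← hxcombo]
  exact hS hs'S hyS (by positivity) (by positivity) (by field_simp)

theorem hull_inter_hyperplane {S : Set V'} {u : V'} {c : ℝ}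
    [NormedAddCommGroup V'] [InnerProductSpace ℝ V']
    (hS : ∀ z ∈ S, (inner ℝ u z : ℝ) ≤ c) {y : V'} (hy : y ∈ convexHull ℝ S)
    (hyc : (inner ℝ u y : ℝ) = c) :
    y ∈ convexHull ℝ (S ∩ {z | (inner ℝ u z : ℝ) = c}) := by
  classical
  rw [convexHull_eq] at hy
  obtain ⟨ι', t, w, z, hw0, hw1, hzS, hcm⟩ := hy
  have hinner : (inner ℝ u (t.centerMass w z) : ℝ) = ∑ i ∈ t, w i * inner ℝ u (z i) := by
    rw [Finset.centerMass_eq_of_sum_1 _ _ hw1, inner_sum]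
    exact Finset.sum_congr rfl fun i _ => real_inner_smul_right u (z i) (w i)
  have hsum : ∑ i ∈ t, w i * inner ℝ u (z i) = c := by rw [← hinner, hcm, hyc]
  have hzero : ∑ i ∈ t, w i * (c - inner ℝ u (z i)) = 0 := by
    have : ∑ i ∈ t, w i * (c - inner ℝ u (z i))
        = (∑ i ∈ t, w i) * c - ∑ i ∈ t, w i * inner ℝ u (z i) := by
      rw [Finset.sum_mul]
      rw [← Finset.sum_sub_distrib]
      exact Finset.sum_congr rfl fun i _ => by ring
    rw [this, hw1, hsum]; ring
  have hkey : ∀ i ∈ t, w i ≠ 0 → (inner ℝ u (z i) : ℝ) = c := by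
    intro i hi hwi
    have := (Finset.sum_eq_zero_iff_of_nonneg (fun i hi =>
      mul_nonneg (hw0 i hi) (sub_nonneg.mpr (hS _ (hzS i hi))))).mp hzero i hi
    rcases mul_eq_zero.mp this with h | h
    · exact absurd h hwi
    · linarith
  rw [← hcm, ← Finset.centerMass_filter_ne_zero]
  apply Finset.centerMass_mem_convexHull
  · exact fun i hi => hw0 i (Finset.mem_filter.mp hi).1
  · rw [Finset.sum_filter_ne_zero, hw1]; norm_num
  · rintro i hi
    obtain ⟨hit, hwi⟩ := Finset.mem_filter.mp hi
    exact ⟨hzS i hit, hkey i hit hwi⟩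


section Main

variable {n : ℕ}

local notation "E" => EuclideanSpace ℝ (Fin n)

theorem main_lemma :
    ∀ (r : ℕ) (ι : Type) (_ : Finite ι) (I : ι → Set E)
      (hIc : ∀ j, Convex ℝ (I j)) (hIs : ∀ j, ∃ a b, I j ⊆ segment ℝ a b)
      (hdisj : ∀ s t, s ≠ t → closure (I s) ∩ closure (I t) = ∅)
      (A B C : Set E)
      (hA : A = convexHull ℝ A ∩ (⋃ j, I j))
      (hB : B = convexHull ℝ B ∩ (⋃ j, I j))
      (hC : C = convexHull ℝ C ∩ (⋃ j, I j))
      (hJBC : convexHull ℝ (A ∪ B) ∩ (⋃ j, I j) = convexHull ℝ (A ∪ C) ∩ (⋃ j, I j))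
      (x : E)
      (hx : x ∈ convexHull ℝ (A ∪ B) ∩ (⋃ j, I j))
      (hr : Module.finrank ℝ (vectorSpan ℝ (convexHull ℝ (A ∪ B) ∩ (⋃ j, I j))) < r),
      x ∈ convexHull ℝ (A ∪ B ∩ C) := by
  intro r
  induction r with
  | zero =>
    intro ι _ I hIc hIs hdisj A B C hA hB hC hJBC x hx hr
    exact absurd hr (Nat.not_lt_zero _)
  | succ r IH =>
    intro ι hfin I hIc hIs hdisj A B C hA hB hC hJBC x hx hr
    classical
    set X : Set E := ⋃ j, I j with hX
    set J : Set E := convexHull ℝ (A ∪ B) ∩ X with hJdef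
    -- basic inclusions
    have hIX : ∀ j, I j ⊆ X := fun j => subset_iUnion I j
    have hAX : A ⊆ X := by intro z hz; rw [hA] at hz; exact hz.2
    have hBX : B ⊆ X := by intro z hz; rw [hB] at hz; exact hz.2
    have hCX : C ⊆ X := by intro z hz; rw [hC] at hz; exact hz.2
    have hAJ : A ⊆ J := fun z hz =>
      ⟨subset_convexHull ℝ _ (Or.inl hz), hAX hz⟩
    have hBJ : B ⊆ J := fun z hz =>
      ⟨subset_convexHull ℝ _ (Or.inr hz), hBX hz⟩
    have hCJ : C ⊆ J := by
      intro z hz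
      have h1 : z ∈ convexHull ℝ (A ∪ C) ∩ X :=
        ⟨subset_convexHull ℝ _ (Or.inr hz), hCX hz⟩
      rwa [← hJBC] at h1
    have hJA : J ⊆ convexHull ℝ (A ∪ B) := inter_subset_left
    have hJAC : J ⊆ convexHull ℝ (A ∪ C) := by
      intro z hz
      rw [hJBC] at hz
      exact hz.1
    have hABJ : A ∪ B ⊆ J := union_subset hAJ hBJ
    have hACJ : A ∪ C ⊆ J := union_subset hAJ hCJ
    have hullJB : convexHull ℝ J = convexHull ℝ (A ∪ B) :=
      Subset.antisymm (convexHull_min hJA (convex_convexHull ℝ _)) (convexHull_mono hABJ)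
    have hullJC : convexHull ℝ J = convexHull ℝ (A ∪ C) :=
      Subset.antisymm (convexHull_min hJAC (convex_convexHull ℝ _)) (convexHull_mono hACJ)
    have hullEq : convexHull ℝ (A ∪ B) = convexHull ℝ (A ∪ C) := by
      rw [← hullJB, hullJC]
    set G : Set E := A ∪ B ∩ C with hG
    have hGJ : G ⊆ J := union_subset hAJ (fun z hz => hBJ hz.1)
    -- convexity of traces
    have htrace : ∀ D : Set E, D = convexHull ℝ D ∩ X → ∀ j, Convex ℝ (D ∩ I j) := by
      intro D hD j
      have h1 : D ∩ I j = convexHull ℝ D ∩ I j := by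
        conv_lhs => rw [hD]
        rw [inter_assoc, inter_eq_self_of_subset_right (hIX j)]
      rw [h1]
      exact (convex_convexHull ℝ D).inter (hIc j)
    have hAtr := htrace A hA
    have hBtr := htrace B hB
    have hCtr := htrace C hC
    -- endpoints and compactness
    choose ea eb hseg using hIs
    set P0 : Set E := ⋃ j, ({ea j, eb j} : Set E) with hP0
    have hP0fin : P0.Finite := finite_iUnion fun j => (finite_singleton _).insert _
    have hXP0 : X ⊆ convexHull ℝ P0 := by
      rw [hX]
      apply iUnion_subset
      intro j
      refine (hseg j).trans ?_
      rw [← convexHull_pair]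
      exact convexHull_mono (subset_iUnion (fun j => ({ea j, eb j} : Set E)) j)
    have hJP0 : convexHull ℝ (A ∪ B) ⊆ convexHull ℝ P0 :=
      convexHull_min ((union_subset hAX hBX).trans hXP0) (convex_convexHull ℝ _)
    set K : Set E := closure (convexHull ℝ (A ∪ B)) with hK
    have hKcomp : IsCompact K :=
      IsCompact.of_isClosed_subset (hP0fin.isCompact_convexHull ℝ) isClosed_closure
        (closure_minimal hJP0 (hP0fin.isClosed_convexHull ℝ))
    have hKconv : Convex ℝ K := (convex_convexHull ℝ _).closure
    have hxK : x ∈ K := subset_closure (hJA hx)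
    have hABK : A ∪ B ⊆ K := (subset_convexHull ℝ _).trans subset_closure
    have hACK : A ∪ C ⊆ K := by
      refine (subset_convexHull ℝ (A ∪ C)).trans ?_
      rw [← hullEq]
      exact subset_closure
    -- localization of closures
    have hlocal : ∀ D : Set E, D ⊆ X → closure D = ⋃ j, closure (D ∩ I j) := by
      intro D hD
      conv_lhs => rw [show D = ⋃ j, D ∩ I j from by
        rw [← inter_iUnion]
        exact (inter_eq_self_of_subset_left (hX ▸ hD)).symm]
      exact closure_iUnion_fin _
    -- closure of hull is hull of closure
    have hclosedhull : ∀ U V : Set E, U ⊆ X → V ⊆ X →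
        (∀ j, Convex ℝ (U ∩ I j)) → (∀ j, Convex ℝ (V ∩ I j)) →
        convexHull ℝ (closure (U ∪ V)) = closure (convexHull ℝ (U ∪ V)) := by
      intro U V hUX hVX hUc hVc
      have hcl : closure (U ∪ V)
          = ⋃ s : ι ⊕ ι, Sum.elim (fun j => closure (U ∩ I j))
              (fun j => closure (V ∩ I j)) s := by
        rw [closure_union, hlocal U hUX, hlocal V hVX, iUnion_sum]
        rfl
      obtain ⟨P, hPfin, hPeq⟩ := convexHull_union_segments
        (Sum.elim (fun j => closure (U ∩ I j)) (fun j => closure (V ∩ I j)))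
        (by
          rintro (j | j)
          · rcases eq_empty_or_nonempty (U ∩ I j) with hemp | hne
            · exact Or.inr (by simp [hemp])
            · exact Or.inl (closure_convex_segment (hUc j)
                (inter_subset_right.trans (hseg j)) hne)
          · rcases eq_empty_or_nonempty (V ∩ I j) with hemp | hne
            · exact Or.inr (by simp [hemp])
            · exact Or.inl (closure_convex_segment (hVc j)
                (inter_subset_right.trans (hseg j)) hne))
      apply Subset.antisymm
      · exact convexHull_min (closure_mono (subset_convexHull ℝ _))
          (convex_convexHull ℝ _).closure
      · apply closure_minimal (convexHull_mono subset_closure)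
        rw [hcl, hPeq]
        exact hPfin.isClosed_convexHull ℝ
    have hKcl : K = convexHull ℝ (closure (A ∪ B)) :=
      (hclosedhull A B hAX hBX hAtr hBtr).symm
    have hKclC : K = convexHull ℝ (closure (A ∪ C)) := by
      rw [hK, hullEq]
      exact (hclosedhull A C hAX hCX hAtr hCtr).symm
    -- extreme points lie in closure G
    have hextG : ∀ v ∈ extremePoints ℝ K, v ∈ closure G := by
      intro v hv
      have hvAB : v ∈ closure (A ∪ B) :=
        extremePoints_convexHull_subset (hKcl ▸ hv)
      have hvAC : v ∈ closure (A ∪ C) :=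
        extremePoints_convexHull_subset (hKclC ▸ hv)
      rw [closure_union] at hvAB hvAC
      rcases hvAB with hvA | hvB
      · exact closure_mono subset_union_left hvA
      rcases hvAC with hvA | hvC
      · exact closure_mono subset_union_left hvA
      -- localize to a common segment
      rw [hlocal B hBX, mem_iUnion] at hvB
      obtain ⟨jB, hvB⟩ := hvB
      rw [hlocal C hCX, mem_iUnion] at hvC
      obtain ⟨jC, hvC⟩ := hvC
      have hjeq : jB = jC := by
        by_contra hne
        have h1 : v ∈ closure (I jB) := closure_mono inter_subset_right hvB
        have h2 : v ∈ closure (I jC) := closure_mono inter_subset_right hvC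
        have := mem_inter h1 h2
        rw [hdisj jB jC hne] at this
        exact this
      subst hjeq
      by_cases hvBm : v ∈ B
      · by_cases hvCm : v ∈ C
        · exact subset_closure (Or.inr ⟨hvBm, hvCm⟩)
        · have hvhull : v ∈ convexHull ℝ (A ∪ C) := hJAC (hBJ hvBm)
          rcases mem_of_extreme hKconv hv hACK hvhull with hvA | hvC'
          · exact closure_mono subset_union_left (subset_closure hvA)
          · exact absurd hvC' hvCm
      · by_cases hvCm : v ∈ C
        · have hvhull : v ∈ convexHull ℝ (A ∪ B) := hJA (hCJ hvCm)
          rcases mem_of_extreme hKconv hv hABK hvhull with hvA | hvB'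
          · exact closure_mono subset_union_left (subset_closure hvA)
          · exact absurd hvB' hvBm
        · -- the 2-d case
          have hvseg : v ∈ segment ℝ (ea jB) (eb jB) := by
            have h1 : v ∈ closure (I jB) := closure_mono inter_subset_right hvB
            have h2 : closure (I jB) ⊆ segment ℝ (ea jB) (eb jB) :=
              closure_minimal (hseg jB) (isClosed_segment' _ _)
            exact h2 h1
          have h2d := ext_2d hv (hBtr jB)
            ((inter_subset_left.trans hBJ).trans (hJA.trans subset_closure))
            (inter_subset_right.trans (hseg jB))
            (hCtr jB)
            ((inter_subset_left.trans hCJ).trans (hJA.trans subset_closure))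
            (inter_subset_right.trans (hseg jB))
            hvB (fun h => hvBm h.1) hvC (fun h => hvCm h.1) hvseg
          refine closure_mono ?_ h2d
          rintro z ⟨⟨hz1, _⟩, ⟨hz2, _⟩⟩
          exact Or.inr ⟨hz1, hz2⟩
    -- K is the closed hull of G
    have hKG : K = closure (convexHull ℝ G) := by
      apply Subset.antisymm
      · have h1 : closure (convexHull ℝ (extremePoints ℝ K)) = K :=
          closure_convexHull_extremePoints hKcomp hKconv
        rw [← h1]
        apply closure_minimal ?_ isClosed_closure
        apply convexHull_min ?_ (convex_convexHull ℝ G).closure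
        exact fun v hv => closure_mono (subset_convexHull ℝ G) (hextG v hv)
      · apply closure_minimal ?_ isClosed_closure
        exact (convexHull_mono hGJ).trans (hullJB ▸ subset_closure)
    -- spans agree
    have hfd : ∀ (s : AffineSubspace ℝ E), IsClosed (s : Set E) := fun s =>
      s.closed_of_finiteDimensional
    have hKspan : K ⊆ (affineSpan ℝ (convexHull ℝ G) : Set E) := by
      rw [hKG]
      exact closure_minimal (subset_affineSpan ℝ _) (hfd _)
    have hspan : affineSpan ℝ (convexHull ℝ G) = affineSpan ℝ J := by
      apply le_antisymm
      · rw [affineSpan_convexHull]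
        exact affineSpan_mono ℝ hGJ
      · apply affineSpan_le.mpr
        intro z hz
        exact hKspan (subset_closure (hJA hz))
    -- dichotomy
    by_cases hrel : ∃ ε > 0, ∀ y ∈ (affineSpan ℝ (convexHull ℝ G) : Set E),
        dist y x < ε → y ∈ K
    · -- relative interior case : conclude directly
      have hGne : (convexHull ℝ G).Nonempty := by
        rcases eq_empty_or_nonempty (convexHull ℝ G) with hemp | h
        · exfalso
          have : x ∈ closure (convexHull ℝ G) := hKG ▸ hxK
          rw [hemp, closure_empty] at this
          exact this
        · exact h
      have hxspan : x ∈ affineSpan ℝ (convexHull ℝ G) := by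
        rw [hspan]
        exact subset_affineSpan ℝ J hx
      have hxG : x ∈ convexHull ℝ G := by
        apply mem_of_relint (convex_convexHull ℝ G) hGne hxspan
        obtain ⟨ε, hε, h⟩ := hrel
        exact ⟨ε, hε, fun y hy hd => hKG ▸ h y hy hd⟩
      exact hxG
    · -- boundary case : supporting hyperplane and induction
      push_neg at hrel
      have hseqex : ∀ m : ℕ, ∃ y, y ∈ (affineSpan ℝ (convexHull ℝ G) : Set E) ∧
          dist y x < 1 / (m + 1) ∧ y ∉ K := by
        intro m
        obtain ⟨y, hy1, hy2, hy3⟩ := hrel (1 / (m + 1)) (by positivity)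
        exact ⟨y, hy1, hy2, hy3⟩
      choose y hyspan hyd hyK using hseqex
      have hKne : K.Nonempty := ⟨x, hxK⟩
      have proj : ∀ m, ∃ p ∈ K, ‖y m - p‖ = ⨅ w : K, ‖y m - ↑w‖ := fun m =>
        exists_norm_eq_iInf_of_complete_convex hKne hKcomp.isComplete hKconv (y m)
      choose p hpK hpdist using proj
      have hobtuse : ∀ m, ∀ w ∈ K, (inner ℝ (y m - p m) (w - p m) : ℝ) ≤ 0 := fun m =>
        (norm_eq_iInf_iff_real_inner_le_zero hKconv (hpK m)).mp (hpdist m)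
      have hyp : ∀ m, y m ≠ p m := fun m h => hyK m (h ▸ hpK m)
      set u : ℕ → E := fun m => ‖y m - p m‖⁻¹ • (y m - p m) with hu
      have hunorm : ∀ m, ‖u m‖ = 1 := by
        intro m
        have h0 : ‖y m - p m‖ ≠ 0 := by
          simpa using sub_ne_zero.mpr (hyp m)
        rw [hu]
        simp only [norm_smul, norm_inv, norm_norm]
        field_simp
      have hpx : Filter.Tendsto p Filter.atTop (nhds x) := by
        rw [tendsto_iff_dist_tendsto_zero]
        apply squeeze_zero (fun m => dist_nonneg) (g := fun m : ℕ => 2 * (1 / ((m : ℝ) + 1)))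
        · intro m
          have h1 : ‖y m - p m‖ ≤ ‖y m - x‖ := by
            rw [hpdist m]
            exact ciInf_le ⟨0, fun r ⟨w, hw⟩ => hw ▸ norm_nonneg _⟩ (⟨x, hxK⟩ : K)
          have h2 : dist (p m) (y m) ≤ dist (y m) x := by
            rw [dist_comm, dist_eq_norm, dist_eq_norm]
            exact h1
          calc dist (p m) x ≤ dist (p m) (y m) + dist (y m) x := dist_triangle _ _ _
          _ ≤ dist (y m) x + dist (y m) x := by linarith
          _ ≤ 2 * (1 / ((m : ℝ) + 1)) := by linarith [le_of_lt (hyd m)]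
        · have : Filter.Tendsto (fun n : ℕ => 1 / ((n : ℝ) + 1)) Filter.atTop (nhds 0) :=
            tendsto_one_div_add_atTop_nhds_zero_nat
          have h2 := this.const_mul (2 : ℝ)
          simpa using h2
      obtain ⟨u0, hu0s, σ, hσmono, hσlim⟩ :=
        (isCompact_sphere (0 : E) 1).tendsto_subseq (x := u)
          (fun m => by
            rw [Metric.mem_sphere, dist_zero_right]
            exact hunorm m)
      have hu0 : u0 ≠ 0 := by
        intro h
        rw [Metric.mem_sphere, dist_zero_right, h, norm_zero] at hu0s
        norm_num at hu0s
      have hdir : u0 ∈ (affineSpan ℝ (convexHull ℝ G)).direction := by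
        have hdc : IsClosed ((affineSpan ℝ (convexHull ℝ G)).direction : Set E) :=
          Submodule.closed_of_finiteDimensional _
        apply hdc.mem_of_tendsto hσlim
        apply Filter.Eventually.of_forall
        intro j
        apply Submodule.smul_mem
        have h1 : y (σ j) ∈ affineSpan ℝ (convexHull ℝ G) := hyspan _
        have h2 : p (σ j) ∈ affineSpan ℝ (convexHull ℝ G) := hKspan (hpK _)
        have := AffineSubspace.vsub_mem_direction h1 h2
        simpa [vsub_eq_sub] using this
      have hsupp' : ∀ w ∈ K, (inner ℝ u0 w : ℝ) ≤ inner ℝ u0 x := by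
        intro w hw
        have hterm : ∀ j, (inner ℝ (u (σ j)) (w - p (σ j)) : ℝ) ≤ 0 := by
          intro j
          rw [hu]
          simp only []
          rw [real_inner_smul_left]
          exact mul_nonpos_of_nonneg_of_nonpos (inv_nonneg.mpr (norm_nonneg _))
            (hobtuse _ w hw)
        have hlim : Filter.Tendsto (fun j => (inner ℝ (u (σ j)) (w - p (σ j)) : ℝ))
            Filter.atTop (nhds (inner ℝ u0 (w - x))) := by
          exact Filter.Tendsto.inner hσlim
            (tendsto_const_nhds.sub (hpx.comp hσmono.tendsto_atTop))
        have := le_of_tendsto hlim (Filter.Eventually.of_forall hterm)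
        rw [inner_sub_right] at this
        linarith
      set c : ℝ := inner ℝ u0 x with hc
      set H : Set E := {z : E | (inner ℝ u0 z : ℝ) = c} with hH
      have hHconv : Convex ℝ H := by
        refine convex_hyperplane (f := fun z : E => (inner ℝ u0 z : ℝ)) ?_ c
        exact ⟨fun a b => inner_add_right u0 a b, fun r a => real_inner_smul_right u0 a r⟩
      have hxH : x ∈ H := rfl
      -- restricted system
      set I' : ι → Set E := fun j => I j ∩ H with hI'
      have hIc' : ∀ j, Convex ℝ (I' j) := fun j => (hIc j).inter hHconv
      have hIs' : ∀ j, ∃ a b, I' j ⊆ segment ℝ a b := fun j =>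
        ⟨ea j, eb j, inter_subset_left.trans (hseg j)⟩
      have hdisj' : ∀ s t, s ≠ t → closure (I' s) ∩ closure (I' t) = ∅ := by
        intro s t hst
        apply eq_empty_of_subset_empty
        calc closure (I' s) ∩ closure (I' t)
            ⊆ closure (I s) ∩ closure (I t) :=
              inter_subset_inter (closure_mono inter_subset_left)
                (closure_mono inter_subset_left)
        _ = ∅ := hdisj s t hst
      have hX' : (⋃ j, I' j) = X ∩ H := by
        simp only [hI']
        rw [← iUnion_inter, ← hX]
      -- relative convexity restricts
      have hrel' : ∀ D : Set E, D = convexHull ℝ D ∩ X →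
          D ∩ H = convexHull ℝ (D ∩ H) ∩ (⋃ j, I' j) := by
        intro D hD
        rw [hX']
        apply Subset.antisymm
        · intro z hz
          refine ⟨subset_convexHull ℝ _ hz, ⟨?_, hz.2⟩⟩
          have := hz.1
          rw [hD] at this
          exact this.2
        · rintro z ⟨hz1, hz2, hz3⟩
          refine ⟨?_, hz3⟩
          rw [hD]
          exact ⟨convexHull_mono inter_subset_left hz1, hz2⟩
      -- key restriction of hulls
      have hrestr : ∀ D : Set E, A ∪ D ⊆ K → ∀ z ∈ convexHull ℝ (A ∪ D), z ∈ H →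
          z ∈ convexHull ℝ ((A ∩ H) ∪ (D ∩ H)) := by
        intro D hDK z hz hzH
        have := hull_inter_hyperplane (S := A ∪ D) (u := u0) (c := c)
          (fun w hw => hsupp' w (hDK hw)) hz hzH
        rwa [union_inter_distrib_right] at this
      have hJH : ∀ D : Set E, A ∪ D ⊆ K → J = convexHull ℝ (A ∪ D) ∩ X →
          convexHull ℝ ((A ∩ H) ∪ (D ∩ H)) ∩ (⋃ j, I' j) = J ∩ H := by
        intro D hDK hJD
        rw [hX']
        apply Subset.antisymm
        · rintro z ⟨hz1, hz2, hz3⟩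
          constructor
          · rw [hJD]
            refine ⟨convexHull_mono
              (union_subset_union inter_subset_left inter_subset_left) hz1, hz2⟩
          · exact hz3
        · rintro z ⟨hz1, hz2⟩
          have hz1' := hz1
          rw [hJD] at hz1'
          exact ⟨hrestr D hDK z hz1'.1 hz2, hz1'.2, hz2⟩
      have hJHB := hJH B hABK hJdef
      have hJHC := hJH C hACK (by rw [hJBC])
      have hJ' : convexHull ℝ ((A ∩ H) ∪ (B ∩ H)) ∩ (⋃ j, I' j)
          = convexHull ℝ ((A ∩ H) ∪ (C ∩ H)) ∩ (⋃ j, I' j) := by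
        rw [hJHB, hJHC]
      -- rank drops
      have hy0 : ∃ y0 ∈ J, (inner ℝ u0 y0 : ℝ) ≠ c := by
        by_contra hno
        push_neg at hno
        have hWJ : vectorSpan ℝ J ≤ LinearMap.ker ((innerSL ℝ u0 : E →L[ℝ] ℝ) : E →ₗ[ℝ] ℝ) := by
          rw [vectorSpan_def]
          apply Submodule.span_le.mpr
          rintro d hd
          rw [Set.mem_vsub] at hd
          obtain ⟨z1, hz1, z2, hz2, rfl⟩ := hd
          rw [SetLike.mem_coe, LinearMap.mem_ker]
          show (inner ℝ u0 (z1 -ᵥ z2) : ℝ) = 0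
          rw [vsub_eq_sub, inner_sub_right, hno z1 hz1, hno z2 hz2, sub_self]
        have hu0W : (inner ℝ u0 u0 : ℝ) = 0 := by
          have h1 : u0 ∈ vectorSpan ℝ J := by
            rw [← direction_affineSpan, ← hspan]
            exact hdir
          exact hWJ h1
        rw [inner_self_eq_zero] at hu0W
        exact hu0 hu0W
      obtain ⟨y0, hy0J, hy0c⟩ := hy0
      have hkerJH : vectorSpan ℝ (J ∩ H) ≤ LinearMap.ker ((innerSL ℝ u0 : E →L[ℝ] ℝ) : E →ₗ[ℝ] ℝ) := by
        rw [vectorSpan_def]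
        apply Submodule.span_le.mpr
        rintro d hd
        rw [Set.mem_vsub] at hd
        obtain ⟨z1, hz1, z2, hz2, rfl⟩ := hd
        rw [SetLike.mem_coe, LinearMap.mem_ker]
        show (inner ℝ u0 (z1 -ᵥ z2) : ℝ) = 0
        rw [vsub_eq_sub, inner_sub_right, hz1.2, hz2.2, sub_self]
      have hrank : Module.finrank ℝ (vectorSpan ℝ (J ∩ H))
          < Module.finrank ℝ (vectorSpan ℝ J) := by
        apply Submodule.finrank_lt_finrank_of_lt
        apply lt_of_le_of_ne (vectorSpan_mono ℝ inter_subset_left)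
        intro heq
        have h1 : y0 -ᵥ x ∈ vectorSpan ℝ J := vsub_mem_vectorSpan ℝ hy0J hx
        rw [← heq] at h1
        have h2 := hkerJH h1
        rw [LinearMap.mem_ker] at h2
        have h3 : (inner ℝ u0 (y0 - x) : ℝ) = 0 := h2
        rw [inner_sub_right] at h3
        exact hy0c (by rw [hc]; linarith)
      -- apply the induction hypothesis
      have happ := IH ι hfin I' hIc' hIs' hdisj' (A ∩ H) (B ∩ H) (C ∩ H)
        (hrel' A hA) (hrel' B hB) (hrel' C hC) hJ' x
        (by rw [hJHB]; exact ⟨hx, hxH⟩)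
        (by
          rw [hJHB]
          exact lt_of_lt_of_le hrank (Nat.lt_succ_iff.mp hr))
      refine convexHull_mono ?_ happ
      rintro z (⟨hz1, _⟩ | ⟨⟨hzB, _⟩, hzC, _⟩)
      · exact Or.inl hz1
      · exact Or.inr ⟨hzB, hzC⟩

end Main

theorem convex_of_between {F : Type*} [NormedAddCommGroup F] [InnerProductSpace ℝ F]
    {S : Set F} {a b : F} (h1 : openSegment ℝ a b ⊆ S) (h2 : S ⊆ segment ℝ a b) :
    Convex ℝ S := by
  rcases eq_or_ne a b with rfl | hab
  · rw [segment_same] at h2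
    rw [openSegment_same] at h1
    rw [Subset.antisymm h2 h1]
    exact convex_singleton a
  · intro x hx y hy l m hl hm hlm
    rcases eq_or_lt_of_le hl with rfl | hl'
    · rw [zero_add] at hlm
      rw [hlm]
      simpa using hy
    rcases eq_or_lt_of_le hm with rfl | hm'
    · rw [add_zero] at hlm
      rw [hlm]
      simpa using hx
    have hxt := lphi_mem_Icc hab (h2 hx)
    have hyt := lphi_mem_Icc hab (h2 hy)
    have hxeq : lpsi a b (lphi a b x) = x := lpsi_lphi hab (h2 hx)
    have hyeq : lpsi a b (lphi a b y) = y := lpsi_lphi hab (h2 hy)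
    have hcombo : l • x + m • y = lpsi a b (l * lphi a b x + m * lphi a b y) := by
      rw [lpsi_affine a b hlm, hxeq, hyeq]
    have htt0 : 0 ≤ l * lphi a b x + m * lphi a b y := by
      have := hxt.1; have := hyt.1; positivity
    have htt1 : l * lphi a b x + m * lphi a b y ≤ 1 := by
      have h1' : l * lphi a b x ≤ l * 1 := mul_le_mul_of_nonneg_left hxt.2 hl
      have h2' : m * lphi a b y ≤ m * 1 := mul_le_mul_of_nonneg_left hyt.2 hm
      nlinarith
    rcases eq_or_lt_of_le htt0 with h0 | h0
    · -- combination is 0 : x = y = a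
      have hx0 : lphi a b x = 0 := by nlinarith [hxt.1, hyt.1]
      have hy0 : lphi a b y = 0 := by nlinarith [hxt.1, hyt.1]
      have hxa : x = a := by rw [← hxeq, hx0]; simp [lpsi]
      have hya : y = a := by rw [← hyeq, hy0]; simp [lpsi]
      rw [hxa, hya, ← add_smul, hlm, one_smul]
      rw [← hxa]; exact hx
    rcases eq_or_lt_of_le htt1 with h1' | h1'
    · -- combination is 1 : x = y = b
      have hx1 : lphi a b x = 1 := by nlinarith [hxt.2, hyt.2]
      have hy1 : lphi a b y = 1 := by nlinarith [hxt.2, hyt.2]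
      have hxy : x = y := by rw [← hxeq, ← hyeq, hx1, hy1]
      rw [← hxy, ← add_smul, hlm, one_smul]
      exact hx
    · apply h1
      rw [openSegment_eq_image' ℝ a b]
      exact ⟨l * lphi a b x + m * lphi a b y, ⟨h0, h1'⟩, hcombo.symm⟩

end JsdAux

/-- A segment in `ℝ^n`: a set squeezed between the open and the closed segment
with endpoints `a`, `b`. -/
def IsSegment {n : ℕ} (S : Set (EuclideanSpace ℝ (Fin n))) : Prop :=
  ∃ a b : EuclideanSpace ℝ (Fin n), openSegment ℝ a b ⊆ S ∧ S ⊆ segment ℝ a b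

/-- `Y` is a relatively convex subset of `X`: `Y = conv(Y) ∩ X`. -/
def relConvex {n : ℕ} (X Y : Set (EuclideanSpace ℝ (Fin n))) : Prop :=
  Y = convexHull ℝ Y ∩ X

/-- The join in the lattice `Co(ℝ^n, X)`: `A ∨ B = conv(A ∪ B) ∩ X`. -/
def coJoin {n : ℕ} (X A B : Set (EuclideanSpace ℝ (Fin n))) : Set (EuclideanSpace ℝ (Fin n)) :=
  convexHull ℝ (A ∪ B) ∩ X

/-- If `X ⊆ ℝ^n` is a finite union of segments whose closures are pairwise disjoint,
then the lattice `Co(ℝ^n, X)` is join-semidistributive. -/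
theorem jsd_of_pairwise_disjoint_closures {n k : ℕ}
    (I : Fin k → Set (EuclideanSpace ℝ (Fin n))) (hI : ∀ j, IsSegment (I j))
    (hdisj : ∀ s t, s ≠ t → closure (I s) ∩ closure (I t) = ∅)
    (X : Set (EuclideanSpace ℝ (Fin n))) (hX : X = ⋃ j, I j) :
    ∀ A B C, relConvex X A → relConvex X B → relConvex X C →
      coJoin X A B = coJoin X A C → coJoin X A B = coJoin X A (B ∩ C) := by
  subst hX
  intro A B C hA hB hC hJBC
  unfold relConvex at hA hB hC
  unfold coJoin at hJBC ⊢
  have hIc : ∀ j, Convex ℝ (I j) := fun j =>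
    JsdAux.convex_of_between (hI j).choose_spec.choose_spec.1
      (hI j).choose_spec.choose_spec.2
  have hIs : ∀ j, ∃ a b, I j ⊆ segment ℝ a b := fun j =>
    ⟨(hI j).choose, (hI j).choose_spec.choose, (hI j).choose_spec.choose_spec.2⟩
  apply Subset.antisymm
  · intro x hx
    refine ⟨?_, hx.2⟩
    exact JsdAux.main_lemma
      (Module.finrank ℝ (vectorSpan ℝ (convexHull ℝ (A ∪ B) ∩ ⋃ j, I j)) + 1)
      (Fin k) (by infer_instance) I hIc hIs hdisj A B C hA hB hC hJBC x hx
      (Nat.lt_succ_self _)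
  · intro x hx
    refine ⟨?_, hx.2⟩
    refine convexHull_mono ?_ hx.1
    exact union_subset_union_right A inter_subset_left
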